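/- For Hermitian matrices A and the family A_s = A + tan(s)·I with s ∈ (-π/2, π/2), the map s ↦ U_{A_s} = (A_s + iI)(A_s - iI)^{-1} is differentiable, and its logarithmic derivative at s = 0 satisfies (d/ds U_{A_s})|_{s=0} · U_{A_0}^{-1} = -2i(A_0^2 + I)^{-1}; in particular, i times this logarithmic derivative is positive definite. -/

import Mathlib

open Matrix
open scoped ComplexOrder

/-- The Cayley transform of the family `A_s = A + tan(s)·I`. -/
noncomputable def cayleyFamily (k : ℕ) (A : Matrix (Fin k) (Fin k) ℂ) (s : ℝ) :
    Matrix (Fin k) (Fin k) ℂ :=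
  (A + (Real.tan s : ℂ) • 1 + Complex.I • 1) * (A + (Real.tan s : ℂ) • 1 - Complex.I • 1)⁻¹

namespace CayleyAux

attribute [local instance] Matrix.linftyOpNormedRing Matrix.linftyOpNormedAlgebra

variable {k : ℕ} {A : Matrix (Fin k) (Fin k) ℂ}

lemma isUnit_add_smul_one (hA : A.IsHermitian) {z : ℂ} (hz : z.im ≠ 0) :
    IsUnit (A + z • 1) := by
  rw [Matrix.isUnit_iff_isUnit_det]
  have hU := (Matrix.mem_unitaryGroup_iff).mp hA.eigenvectorUnitary.2
  have h1 : A + z • 1 =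
      (hA.eigenvectorUnitary : Matrix (Fin k) (Fin k) ℂ) *
        (Matrix.diagonal (RCLike.ofReal ∘ hA.eigenvalues) + z • 1) *
        star (hA.eigenvectorUnitary : Matrix (Fin k) (Fin k) ℂ) := by
    rw [mul_add, add_mul]
    have hsp := hA.spectral_theorem
    rw [Unitary.conjStarAlgAut_apply] at hsp
    rw [← hsp]
    congr 1
    rw [mul_smul_comm, mul_one, smul_mul_assoc, hU]
  rw [h1, Matrix.det_mul, Matrix.det_mul, mul_right_comm, ← Matrix.det_mul, hU,
    Matrix.det_one, one_mul]
  rw [Matrix.smul_one_eq_diagonal, Matrix.diagonal_add, Matrix.det_diagonal]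
  rw [isUnit_iff_ne_zero, Finset.prod_ne_zero_iff]
  intro i _ h
  apply hz
  have := congrArg Complex.im h
  simpa using this

/-- The denominator family. -/
noncomputable def Bm (A : Matrix (Fin k) (Fin k) ℂ) (s : ℝ) : Matrix (Fin k) (Fin k) ℂ :=
  A + (Real.tan s : ℂ) • 1 - Complex.I • 1

lemma isUnit_Bm (hA : A.IsHermitian) (s : ℝ) : IsUnit (Bm A s) := by
  have : Bm A s = A + ((Real.tan s : ℂ) - Complex.I) • 1 := by
    rw [Bm, sub_smul, add_sub_assoc]
  rw [this]
  exact isUnit_add_smul_one hA (by simp)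

lemma cayley_eq (hA : A.IsHermitian) (s : ℝ) :
    cayleyFamily k A s = 1 + (2 * Complex.I) • (Bm A s)⁻¹ := by
  have hB := isUnit_Bm hA s
  have h2 : (2 * Complex.I) • (1 : Matrix (Fin k) (Fin k) ℂ) =
      Complex.I • 1 + Complex.I • 1 := by rw [two_mul, add_smul]
  have hnum : A + (Real.tan s : ℂ) • 1 + Complex.I • 1 =
      Bm A s + (2 * Complex.I) • (1 : Matrix (Fin k) (Fin k) ℂ) := by
    rw [h2, Bm]; abel
  rw [cayleyFamily, show A + (Real.tan s : ℂ) • 1 - Complex.I • 1 = Bm A s from rfl, hnum,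
    add_mul, smul_mul_assoc, one_mul,
    Matrix.mul_nonsing_inv _ ((Matrix.isUnit_iff_isUnit_det _).mp hB)]

lemma hasDerivAt_matrix (hA : A.IsHermitian) {s : ℝ} (hs : Real.cos s ≠ 0) :
    HasDerivAt (fun u => cayleyFamily k A u)
      (-((1 / Real.cos s ^ 2) • ((2 * Complex.I) • ((Bm A s)⁻¹ * (Bm A s)⁻¹)))) s := by
  have hB := isUnit_Bm hA s
  have htan := Real.hasDerivAt_tan hs
  have h1 : HasDerivAt (fun u => Bm A u) ((1 / Real.cos s ^ 2) • (1 : Matrix (Fin k) (Fin k) ℂ)) s := by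
    have : (fun u => Bm A u) = fun u =>
        A + Real.tan u • (1 : Matrix (Fin k) (Fin k) ℂ) - Complex.I • 1 := by
      funext u
      ext i j
      simp [Bm, Complex.real_smul]
    rw [this, show ((1 / Real.cos s ^ 2) • (1 : Matrix (Fin k) (Fin k) ℂ)) =
      (1 / Real.cos s ^ 2 : ℝ) • (1 : Matrix (Fin k) (Fin k) ℂ) from
        (RCLike.real_smul_eq_coe_smul (K := ℂ) _ _).symm]
    exact ((htan.smul_const _).const_add A).sub_const _
  have hinv : HasDerivAt (fun u => Ring.inverse (Bm A u))
      (-((1 / Real.cos s ^ 2) • ((Bm A s)⁻¹ * (Bm A s)⁻¹))) s := by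
    have hF := hasFDerivAt_ringInverse (𝕜 := ℝ) hB.unit
    rw [hB.unit_spec] at hF
    have := hF.comp_hasDerivAt s h1
    refine this.congr_deriv ?_
    have hco : (↑hB.unit⁻¹ : Matrix (Fin k) (Fin k) ℂ) = (Bm A s)⁻¹ := by
      rw [Matrix.coe_units_inv, hB.unit_spec]
    simp only [ContinuousLinearMap.neg_apply, ContinuousLinearMap.mulLeftRight_apply, hco]
    rw [Matrix.mul_smul, Matrix.smul_mul, mul_one]
  have hfinal : HasDerivAt (fun u => (1 : Matrix (Fin k) (Fin k) ℂ) + (2 * Complex.I) • Ring.inverse (Bm A u))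
      ((2 * Complex.I) • -((1 / Real.cos s ^ 2) • ((Bm A s)⁻¹ * (Bm A s)⁻¹))) s :=
    (hinv.const_smul (2 * Complex.I)).const_add (1 : Matrix (Fin k) (Fin k) ℂ)
  have heq : (fun u => cayleyFamily k A u) =
      fun u => (1 : Matrix (Fin k) (Fin k) ℂ) + (2 * Complex.I) • Ring.inverse (Bm A u) := by
    funext u
    rw [cayley_eq hA u, Matrix.nonsing_inv_eq_ringInverse]
  rw [heq]
  convert hfinal using 1
  rw [smul_neg, neg_inj, smul_comm]

lemma hasDerivAt_entry (hA : A.IsHermitian) {s : ℝ} (hs : Real.cos s ≠ 0) (i j : Fin k) :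
    HasDerivAt (fun u => cayleyFamily k A u i j)
      ((-((1 / Real.cos s ^ 2) • ((2 * Complex.I) • ((Bm A s)⁻¹ * (Bm A s)⁻¹)))) i j) s := by
  have h := hasDerivAt_matrix hA hs
  have hE := ((Matrix.entryLinearMap ℝ ℂ i j).toContinuousLinearMap.hasFDerivAt).comp_hasDerivAt s h
  exact hE

end CayleyAux

/-- For Hermitian `A` and `A_s = A + tan(s)·I`, the map `s ↦ U_{A_s}` is differentiable on
`(-π/2, π/2)`, its logarithmic derivative at `s = 0` equals `-2i(A² + I)⁻¹`, and `i` times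
this logarithmic derivative is positive definite. -/
theorem cayley_family_logDeriv (k : ℕ) (A : Matrix (Fin k) (Fin k) ℂ) (hA : A.IsHermitian) :
    (∀ s ∈ Set.Ioo (-(Real.pi / 2) : ℝ) (Real.pi / 2), ∀ i j : Fin k,
        DifferentiableAt ℝ (fun u => cayleyFamily k A u i j) s) ∧
    ∃ D : Matrix (Fin k) (Fin k) ℂ,
      (∀ i j, HasDerivAt (fun u => cayleyFamily k A u i j) (D i j) 0) ∧
      D * (cayleyFamily k A 0)⁻¹ = (-(2 : ℂ) * Complex.I) • (A ^ 2 + 1)⁻¹ ∧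
      (Complex.I • (D * (cayleyFamily k A 0)⁻¹)).PosDef := by
  classical
  constructor
  · intro s hs i j
    have hcos : Real.cos s ≠ 0 := (Real.cos_pos_of_mem_Ioo hs).ne'
    exact (CayleyAux.hasDerivAt_entry hA hcos i j).differentiableAt
  · set N : Matrix (Fin k) (Fin k) ℂ := A - Complex.I • 1 with hNdef
    set P : Matrix (Fin k) (Fin k) ℂ := A + Complex.I • 1 with hPdef
    have hN : IsUnit N := by
      have : N = A + (-Complex.I) • 1 := by rw [hNdef, neg_smul, ← sub_eq_add_neg]
      rw [this]
      exact CayleyAux.isUnit_add_smul_one hA (by simp)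
    have hP : IsUnit P := CayleyAux.isUnit_add_smul_one hA (by simp)
    have hNdet := (Matrix.isUnit_iff_isUnit_det _).mp hN
    have hPdet := (Matrix.isUnit_iff_isUnit_det _).mp hP
    have hB0 : CayleyAux.Bm A 0 = N := by
      simp [CayleyAux.Bm, hNdef]
    have hC0 : cayleyFamily k A 0 = P * N⁻¹ := by
      simp [cayleyFamily, hNdef, hPdef]
    have hPN : P * N = A ^ 2 + 1 := by
      rw [hPdef, hNdef, sq, mul_sub, add_mul]
      simp only [mul_smul_comm, smul_mul_assoc, smul_smul, Complex.I_mul_I, mul_one, one_mul,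
        neg_smul, one_smul, smul_add, smul_neg]
      abel
    have hDU : -((2 * Complex.I) • (N⁻¹ * N⁻¹)) * (cayleyFamily k A 0)⁻¹ =
        (-(2 : ℂ) * Complex.I) • (A ^ 2 + 1)⁻¹ := by
      have hU0inv : (cayleyFamily k A 0)⁻¹ = N * P⁻¹ := by
        rw [hC0, Matrix.mul_inv_rev, Matrix.nonsing_inv_nonsing_inv _ hNdet]
      rw [hU0inv]
      rw [neg_mul, Matrix.smul_mul, mul_assoc, ← mul_assoc N⁻¹ N _,
        Matrix.nonsing_inv_mul _ hNdet, one_mul]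
      rw [← Matrix.mul_inv_rev, hPN]
      rw [← neg_smul, neg_mul]
    have hsq : (A ^ 2).PosSemidef := by
      rw [sq]
      nth_rewrite 1 [← hA]
      exact Matrix.posSemidef_conjTranspose_mul_self A
    have hMpd : (A ^ 2 + 1).PosDef := Matrix.PosDef.posSemidef_add hsq Matrix.PosDef.one
    have hMinv : ((A ^ 2 + 1)⁻¹).PosDef := hMpd.inv
    refine ⟨-((2 * Complex.I) • (N⁻¹ * N⁻¹)), ?_, hDU, ?_⟩
    · intro i j
      have h := CayleyAux.hasDerivAt_entry hA (s := 0) (by simp) i j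
      simpa [hB0] using h
    · rw [hDU, smul_smul,
        show Complex.I * (-(2 : ℂ) * Complex.I) = 2 by
          rw [mul_comm, mul_assoc, Complex.I_mul_I]; ring,
        two_smul]
      exact hMinv.add hMinv
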